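/- If G is NBUE with mean α, i.e. ∫₀^∞ (1 − G(v)) dv = α and ∫_t^∞ (1 − G(v)) dv ≤ α(1 − G(t)) for all t ≥ 0, then V(G) ≤ V(G^M), where G^M(v) = 1 − e^{−v/α} is the exponential distribution function with mean α. (This is formula (1.8): with NBUE service times the M/G/∞ busy period variance is at most the M/M/∞ one.) -/

import Mathlib

open MeasureTheory Real Set Filter

lemma exp_sub_one_le_mul_exp {x : ℝ} (hx : 0 ≤ x) : exp x - 1 ≤ x * exp x := by
  have h := Real.add_one_le_exp (-x)
  rw [Real.exp_neg] at h
  have hp := Real.exp_pos x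
  have h2 : (exp x)⁻¹ * exp x = 1 := inv_mul_cancel₀ (ne_of_gt hp)
  nlinarith

set_option maxHeartbeats 1000000 in
/-- Formula (1.8): with NBUE service times the M/G/∞ busy period variance is at most
the M/M/∞ one, `V(G) ≤ V(G^M)` where `G^M` is exponential with the same mean `α`. -/
theorem nbue_busy_period_variance_le_exponential
    (G : ℝ → ℝ)
    (hmono : Monotone G)
    (hrc : ∀ v : ℝ, ContinuousWithinAt G (Set.Ici v) v)
    (hneg : ∀ v : ℝ, v < 0 → G v = 0)
    (hlim : Tendsto G atTop (nhds 1))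
    (lam α ρ : ℝ)
    (hlam : 0 < lam)
    (hInt : IntegrableOn (fun v => 1 - G v) (Ioi 0))
    (hα : α = ∫ v in Ioi (0:ℝ), (1 - G v))
    (hαpos : 0 < α)
    (hρ : ρ = lam * α)
    (hNBUE : ∀ t : ℝ, 0 ≤ t → (∫ v in Ioi t, (1 - G v)) ≤ α * (1 - G t))
    (GM : ℝ → ℝ)
    (hGM : ∀ v : ℝ, 0 ≤ v → GM v = 1 - exp (-v / α))
    (hGMneg : ∀ v : ℝ, v < 0 → GM v = 0) :
    (2 * exp ρ / lam) * (∫ t in Ioi (0:ℝ), (exp (lam * ∫ v in Ioi t, (1 - G v)) - 1))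
        - ((exp ρ - 1) / lam) ^ 2
      ≤ (2 * exp ρ / lam) * (∫ t in Ioi (0:ℝ), (exp (lam * ∫ v in Ioi t, (1 - GM v)) - 1))
        - ((exp ρ - 1) / lam) ^ 2 := by
  have hGle : ∀ v, G v ≤ 1 := fun v => hmono.ge_of_tendsto hlim v
  have hg0 : ∀ v, 0 ≤ (1 : ℝ) - G v := fun v => sub_nonneg.2 (hGle v)
  have hgmeas : Measurable (fun v => 1 - G v) := measurable_const.sub hmono.measurable
  -- interval integrability of 1 - G on [0, b]
  have hII : ∀ b : ℝ, 0 ≤ b → IntervalIntegrable (fun v => 1 - G v) volume 0 b := by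
    intro b hb
    rw [intervalIntegrable_iff_integrableOn_Ioc_of_le hb]
    exact hInt.mono_set Ioc_subset_Ioi_self
  -- split of the tail integral
  have hsplit : ∀ t : ℝ, 0 ≤ t →
      (∫ v in Ioi t, (1 - G v)) = α - ∫ v in (0:ℝ)..t, (1 - G v) := by
    intro t ht
    rw [intervalIntegral.integral_of_le ht, hα]
    have hU : Ioc (0:ℝ) t ∪ Ioi t = Ioi 0 := Ioc_union_Ioi_eq_Ioi ht
    rw [← hU, setIntegral_union (Ioc_disjoint_Ioi le_rfl) measurableSet_Ioi
      (hInt.mono_set Ioc_subset_Ioi_self) (hInt.mono_set (Ioi_subset_Ioi ht))]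
    ring
  -- key Gronwall estimate: the integrated tail is below the exponential one
  have key : ∀ t : ℝ, 0 ≤ t → (∫ v in Ioi t, (1 - G v)) ≤ α * exp (-t / α) := by
    intro t ht
    set F : ℝ → ℝ := fun x => ∫ v in (0:ℝ)..x, (1 - G v) with hFdef
    set φ : ℝ → ℝ := fun x => exp (x / α) * (α - F x) with hφdef
    have hFcont : ContinuousOn F (Icc 0 t) := by
      have hIcc : IntegrableOn (fun v => 1 - G v) (Icc 0 t) := by
        rw [integrableOn_Icc_iff_integrableOn_Ioc]
        exact hInt.mono_set Ioc_subset_Ioi_self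
      have := intervalIntegral.continuousOn_primitive_interval
        (f := fun v => 1 - G v) (a := (0:ℝ)) (b := t) (μ := volume)
        (by rwa [uIcc_of_le ht])
      rwa [uIcc_of_le ht] at this
    have hφcont : ContinuousOn φ (Icc 0 t) :=
      ((continuous_exp.comp (continuous_id.div_const α)).continuousOn).mul
        (continuousOn_const.sub hFcont)
    have hφderiv : ∀ x ∈ Ico 0 t,
        HasDerivWithinAt φ
          (exp (x / α) * (1 / α) * (α - F x) + exp (x / α) * (-(1 - G x))) (Ici x) x := by
      intro x hx
      have hF : HasDerivWithinAt F (1 - G x) (Ici x) x := by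
        apply intervalIntegral.integral_hasDerivWithinAt_right (hII x hx.1)
          (hgmeas.stronglyMeasurable.stronglyMeasurableAtFilter)
        exact (continuousWithinAt_const.sub (hrc x)).mono Ioi_subset_Ici_self
      have he : HasDerivWithinAt (fun y => exp (y / α)) (exp (x / α) * (1 / α)) (Ici x) x := by
        have : HasDerivAt (fun y : ℝ => exp (y / α)) (exp (x / α) * (1 / α)) x :=
          ((hasDerivAt_id x).div_const α).exp
        exact this.hasDerivWithinAt
      exact he.mul (hF.const_sub α)
    have hφ0 : φ 0 ≤ α := by
      simp [hφdef, hFdef, intervalIntegral.integral_same]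
    have hbound : ∀ x ∈ Ico 0 t,
        exp (x / α) * (1 / α) * (α - F x) + exp (x / α) * (-(1 - G x)) ≤ (0 : ℝ) := by
      intro x hx
      have h1 : α - F x = ∫ v in Ioi x, (1 - G v) := (hsplit x hx.1).symm
      have h2 : (∫ v in Ioi x, (1 - G v)) ≤ α * (1 - G x) := hNBUE x hx.1
      have hep : (0:ℝ) < exp (x / α) := exp_pos _
      rw [h1]
      have : exp (x / α) * (1 / α) * (∫ v in Ioi x, (1 - G v))
          ≤ exp (x / α) * (1 / α) * (α * (1 - G x)) := by
        apply mul_le_mul_of_nonneg_left h2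
        positivity
      have hsimp : exp (x / α) * (1 / α) * (α * (1 - G x)) = exp (x / α) * (1 - G x) := by
        field_simp
      nlinarith
    have hmain : ∀ ⦃x⦄, x ∈ Icc 0 t → φ x ≤ α := by
      have := image_le_of_deriv_right_le_deriv_boundary (f := φ)
        (f' := fun x => exp (x / α) * (1 / α) * (α - F x) + exp (x / α) * (-(1 - G x)))
        (a := 0) (b := t) (B := fun _ => α) (B' := fun _ => 0)
        hφcont hφderiv hφ0 continuousOn_const
        (fun x _ => hasDerivWithinAt_const x _ α) hbound
      exact this
    have hφt : φ t ≤ α := hmain ⟨ht, le_rfl⟩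
    have hept : (0:ℝ) < exp (t / α) := exp_pos _
    have : α - F t ≤ α * exp (-t / α) := by
      rw [neg_div, exp_neg]
      rw [hφdef] at hφt
      calc α - F t = (exp (t / α))⁻¹ * (exp (t / α) * (α - F t)) := by
            field_simp
        _ ≤ (exp (t / α))⁻¹ * α := by
            apply mul_le_mul_of_nonneg_left hφt (by positivity)
        _ = α * (exp (t / α))⁻¹ := by ring
    rw [hsplit t ht]
    exact this
  -- the exponential tail integral
  have hMeq : ∀ t : ℝ, 0 ≤ t → (∫ v in Ioi t, (1 - GM v)) = α * exp (-t / α) := by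
    intro t ht
    have hcongr : ∀ v ∈ Ioi t, (1 : ℝ) - GM v = exp (-v / α) := by
      intro v hv
      rw [hGM v (le_trans ht (le_of_lt hv))]
      ring
    rw [setIntegral_congr_fun measurableSet_Ioi hcongr]
    -- ∫ v in Ioi t, exp (-v / α) = α * exp (-t / α)
    have hderiv : ∀ x ∈ Ioi t, HasDerivAt (fun y => -α * exp (-y / α)) (exp (-x / α)) x := by
      intro x _
      have h1 : HasDerivAt (fun y : ℝ => -y / α) (-1 / α) x := by
        simpa using ((hasDerivAt_id x).neg.div_const α)
      have h2 : HasDerivAt (fun y : ℝ => exp (-y / α)) (exp (-x / α) * (-1 / α)) x := h1.exp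
      have := h2.const_mul (-α)
      rw [show -α * (exp (-x / α) * (-1 / α)) = exp (-x / α) * (α / α) by ring, div_self hαpos.ne', mul_one] at this
      exact this
    have hint : IntegrableOn (fun x => exp (-x / α)) (Ioi t) := by
      have h := exp_neg_integrableOn_Ioi t (b := 1 / α) (by positivity)
      have hfun : ∀ x : ℝ, -(1 / α) * x = -x / α := fun x => by ring
      simpa only [hfun] using h
    have hcont : ContinuousWithinAt (fun y => -α * exp (-y / α)) (Ici t) t :=
      Continuous.continuousWithinAt (by fun_prop)
    have htend : Tendsto (fun y => -α * exp (-y / α)) atTop (nhds 0) := by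
      have h1 : Tendsto (fun y : ℝ => -y / α) atTop atBot := by
        apply Tendsto.atBot_div_const hαpos
        exact tendsto_neg_atBot_iff.mpr tendsto_id
      have h2 : Tendsto (fun y : ℝ => exp (-y / α)) atTop (nhds 0) :=
        Real.tendsto_exp_atBot.comp h1
      have := h2.const_mul (-α)
      simpa using this
    have := MeasureTheory.integral_Ioi_of_hasDerivAt_of_tendsto hcont hderiv hint htend
    rw [this]
    ring
  -- nonnegativity of tail integrals
  have hhG0 : ∀ t : ℝ, 0 ≤ ∫ v in Ioi t, (1 - G v) := fun t =>
    setIntegral_nonneg measurableSet_Ioi fun v _ => hg0 v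
  -- final comparison of the integrals
  apply sub_le_sub_right
  apply mul_le_mul_of_nonneg_left _ (by positivity)
  -- integral mono
  apply integral_mono_of_nonneg
  · exact Eventually.of_forall fun t => by
      have := hhG0 t
      simp only [sub_nonneg, Pi.zero_apply]
      calc (1:ℝ) = exp 0 := (exp_zero).symm
        _ ≤ exp (lam * ∫ v in Ioi t, (1 - G v)) := exp_le_exp.2 (by positivity)
  · -- integrability of the exponential-side integrand
    have hψ : Integrable (fun t => exp (ρ * exp (-t / α)) - 1) (volume.restrict (Ioi 0)) := by
      apply Integrable.mono
        (g := fun t => (ρ * exp ρ) * exp (-(1 / α) * t))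
      · exact ((exp_neg_integrableOn_Ioi 0 (b := 1/α) (by positivity)).const_mul _)
      · apply Continuous.aestronglyMeasurable
        fun_prop
      · rw [ae_restrict_iff' measurableSet_Ioi]
        apply Eventually.of_forall
        intro t ht
        have hρpos : 0 < ρ := by rw [hρ]; positivity
        have hx0 : 0 < ρ * exp (-t / α) := by positivity
        have hxle : ρ * exp (-t / α) ≤ ρ := by
          have : exp (-t / α) ≤ 1 := by
            apply exp_le_one_iff.2
            have ht' : (0:ℝ) < t := ht
            rw [neg_div]
            simp only [Left.neg_nonpos_iff]
            positivity
          nlinarith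
        have h1 : exp (ρ * exp (-t / α)) - 1 ≤ ρ * exp (-t / α) * exp (ρ * exp (-t / α)) :=
          exp_sub_one_le_mul_exp hx0.le
        have h2 : exp (ρ * exp (-t / α)) ≤ exp ρ := exp_le_exp.2 hxle
        have h3 : exp (ρ * exp (-t / α)) - 1 ≤ ρ * exp ρ * exp (-t / α) := by nlinarith
        have hnn : (0:ℝ) ≤ exp (ρ * exp (-t / α)) - 1 := by
          have : (1:ℝ) ≤ exp (ρ * exp (-t / α)) := by
            rw [← exp_zero]; exact exp_le_exp.2 hx0.le
          linarith
        rw [Real.norm_eq_abs, Real.norm_eq_abs, abs_of_nonneg hnn, abs_of_nonneg (by positivity)]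
        calc exp (ρ * exp (-t / α)) - 1 ≤ ρ * exp ρ * exp (-t / α) := h3
          _ = ρ * exp ρ * exp (-(1/α) * t) := by rw [neg_div]; ring_nf
    apply hψ.congr
    rw [Filter.EventuallyEq, ae_restrict_iff' measurableSet_Ioi]
    apply Eventually.of_forall
    intro t ht
    rw [hMeq t (le_of_lt ht), hρ]
    ring_nf
  · filter_upwards [ae_restrict_mem measurableSet_Ioi] with t ht
    have h1 : (∫ v in Ioi t, (1 - G v)) ≤ α * exp (-t / α) := key t (le_of_lt ht)
    have h2 : (∫ v in Ioi t, (1 - GM v)) = α * exp (-t / α) := hMeq t (le_of_lt ht)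
    rw [h2]
    apply sub_le_sub_right
    exact exp_le_exp.2 (mul_le_mul_of_nonneg_left h1 hlam.le)
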